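/- Let q ≥ 3, let c > 0, and suppose the following inequality holds for all q × q row-stochastic matrices N: c·log(1 + (ρ(N)−1)/(q−1)²) ≤ log q − (1/q)h(N). Then for every k with 3 ≤ k ≤ q and every q × k row-stochastic matrix M, we have (k−1)/(q−1)·c·log(1 + ((k/q)ρ(M) − 1)/((q−1)(k−1))) ≤ log k − (1/q)h(M). -/

import Mathlib

open Finset

/-- Splitting a sum over `Fin q` into the first `k` coordinates and a constant tail. -/
lemma row_split_aux {q k : ℕ} (hkq : k ≤ q) (g : Fin k → ℝ) (C : ℝ) :
    ∑ j : Fin q, (if h : (j : ℕ) < k then g ⟨j, h⟩ else C)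
      = (∑ a : Fin k, g a) + ((q : ℝ) - k) * C := by
  classical
  have h1 : ∑ j : Fin q, (if h : (j : ℕ) < k then g ⟨j, h⟩ else C)
      = ∑ j ∈ Finset.range q, (if h : j < k then g ⟨j, h⟩ else C) :=
    Fin.sum_univ_eq_sum_range (fun j => if h : j < k then g ⟨j, h⟩ else C) q
  have h2 : ∑ j ∈ Finset.range q, (if h : j < k then g ⟨j, h⟩ else C)
      = (∑ j ∈ Finset.range k, (if h : j < k then g ⟨j, h⟩ else C))
        + ∑ j ∈ Finset.Ico k q, (if h : j < k then g ⟨j, h⟩ else C) := by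
    rw [Finset.range_eq_Ico, ← Finset.sum_Ico_consecutive _ (Nat.zero_le k) hkq,
      ← Finset.range_eq_Ico]
  have h3 : ∑ j ∈ Finset.range k, (if h : j < k then g ⟨j, h⟩ else C) = ∑ a : Fin k, g a := by
    rw [← Fin.sum_univ_eq_sum_range (fun j => if h : j < k then g ⟨j, h⟩ else C) k]
    exact Finset.sum_congr rfl fun a _ => by rw [dif_pos a.isLt]
  have h4 : ∑ j ∈ Finset.Ico k q, (if h : j < k then g ⟨j, h⟩ else C) = ((q : ℝ) - k) * C := by
    rw [Finset.sum_congr rfl (fun j hj => dif_neg (by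
        have := (Finset.mem_Ico.mp hj).1; omega)),
      Finset.sum_const, Nat.card_Ico, nsmul_eq_mul, Nat.cast_sub hkq]
  rw [h1, h2, h3, h4]

/-- Bernoulli-type inequality for the logarithm, from concavity. -/
lemma log_concave_aux {t y : ℝ} (ht0 : 0 ≤ t) (ht1 : t ≤ 1) (hy : 0 ≤ y) :
    t * Real.log (1 + y) ≤ Real.log (1 + t * y) := by
  have h1m : (1:ℝ) ∈ Set.Ioi (0:ℝ) := Set.mem_Ioi.mpr one_pos
  have h2m : (1 + y) ∈ Set.Ioi (0:ℝ) := Set.mem_Ioi.mpr (by linarith)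
  have ha' : (0:ℝ) ≤ 1 - t := by linarith
  have hab : (1 - t) + t = 1 := by ring
  have h := strictConcaveOn_log_Ioi.concaveOn.2 h1m h2m ha' ht0 hab
  rw [smul_eq_mul, smul_eq_mul, smul_eq_mul, smul_eq_mul, Real.log_one] at h
  have e : (1 - t) * 1 + t * (1 + y) = 1 + t * y := by ring
  rw [e] at h
  linarith

/-- If the Achlioptas–Naor inequality holds at constant c for all q × q
row-stochastic matrices, then its rectangular extension holds for all q × k
row-stochastic matrices (3 ≤ k ≤ q) at the rescaled constant (k−1)c/(q−1). -/
theorem stmt4 (q k : ℕ) (hq : 3 ≤ q) (hk : 3 ≤ k) (hkq : k ≤ q) (c : ℝ) (hc : 0 < c)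
    (hAN : ∀ N : Matrix (Fin q) (Fin q) ℝ,
      (∀ i j, 0 ≤ N i j) → (∀ i, ∑ j, N i j = 1) →
      c * Real.log (1 + ((∑ i, ∑ j, (N i j) ^ 2) - 1) / ((q : ℝ) - 1) ^ 2)
        ≤ Real.log q - (1 / q) * (-∑ i, ∑ j, N i j * Real.log (N i j)))
    (M : Matrix (Fin q) (Fin k) ℝ)
    (hnn : ∀ i j, 0 ≤ M i j) (hrow : ∀ i, ∑ j, M i j = 1) :
    (((k : ℝ) - 1) / ((q : ℝ) - 1)) * c *
      Real.log (1 + (((k : ℝ) / q) * (∑ i, ∑ j, (M i j) ^ 2) - 1)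
        / (((q : ℝ) - 1) * ((k : ℝ) - 1)))
      ≤ Real.log k - (1 / q) * (-∑ i, ∑ j, M i j * Real.log (M i j)) := by
  classical
  have hQ3 : (3:ℝ) ≤ (q:ℝ) := by exact_mod_cast hq
  have hK3 : (3:ℝ) ≤ (k:ℝ) := by exact_mod_cast hk
  have hKQ : (k:ℝ) ≤ (q:ℝ) := by exact_mod_cast hkq
  have hQ0 : (0:ℝ) < (q:ℝ) := by linarith
  have hK0 : (0:ℝ) < (k:ℝ) := by linarith
  have hQ1 : (0:ℝ) < (q:ℝ) - 1 := by linarith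
  have hK1 : (0:ℝ) < (k:ℝ) - 1 := by linarith
  have hQne : (q:ℝ) ≠ 0 := hQ0.ne'
  have hKne : (k:ℝ) ≠ 0 := hK0.ne'
  have hQ1ne : (q:ℝ) - 1 ≠ 0 := hQ1.ne'
  have hK1ne : (k:ℝ) - 1 ≠ 0 := hK1.ne'
  set ρ := ∑ i, ∑ j, (M i j) ^ 2 with hρdef
  set S := ∑ i, ∑ j, M i j * Real.log (M i j) with hSdef
  -- the padded/rescaled matrix
  set N : Matrix (Fin q) (Fin q) ℝ :=
    fun i j => if h : (j : ℕ) < k then ((k:ℝ)/q) * M i ⟨j, h⟩ else 1/q with hNdef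
  have hNnn : ∀ i j, 0 ≤ N i j := by
    intro i j
    by_cases h : (j : ℕ) < k
    · simp only [hNdef, h, dif_pos]
      exact mul_nonneg (by positivity) (hnn _ _)
    · simp only [hNdef, h, dif_neg, not_false_iff]
      positivity
  have hNrow : ∀ i, ∑ j, N i j = 1 := by
    intro i
    have e : ∑ j : Fin q, N i j
        = (∑ a : Fin k, ((k:ℝ)/q) * M i a) + ((q:ℝ) - k) * (1/q) :=
      row_split_aux hkq (fun a => ((k:ℝ)/q) * M i a) (1/q)
    rw [e, ← Finset.mul_sum, hrow i]
    field_simp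
    ring
  -- sum of squares of N
  have hNsq : ∑ i, ∑ j, (N i j) ^ 2 = ((k:ℝ)/q)^2 * ρ + ((q:ℝ) - k)/q := by
    have hrow' : ∀ i, ∑ j, (N i j) ^ 2
        = ((k:ℝ)/q)^2 * (∑ a, (M i a)^2) + ((q:ℝ) - k) * (1/q)^2 := by
      intro i
      have e : ∀ j : Fin q, (N i j)^2
          = (if h : (j : ℕ) < k then (((k:ℝ)/q) * M i ⟨j, h⟩)^2 else (1/(q:ℝ))^2) := by
        intro j
        by_cases h : (j : ℕ) < k <;> simp [hNdef, h]
      rw [Finset.sum_congr rfl (fun j _ => e j),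
        row_split_aux hkq (fun a => (((k:ℝ)/q) * M i a)^2) ((1/(q:ℝ))^2)]
      rw [show (∑ a : Fin k, (((k:ℝ)/q) * M i a)^2) = ((k:ℝ)/q)^2 * ∑ a, (M i a)^2 by
        rw [Finset.mul_sum]; exact Finset.sum_congr rfl fun a _ => by ring]
    rw [Finset.sum_congr rfl (fun i _ => hrow' i), Finset.sum_add_distrib,
      ← Finset.mul_sum, ← hρdef, Finset.sum_const, Finset.card_univ, Fintype.card_fin,
      nsmul_eq_mul]
    field_simp
  -- sum of N log N
  have hNlog : ∑ i, ∑ j, N i j * Real.log (N i j)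
      = ((k:ℝ)/q) * S + (k:ℝ) * Real.log ((k:ℝ)/q) + ((q:ℝ) - k) * Real.log (1/(q:ℝ)) := by
    have eterm : ∀ m : ℝ, 0 ≤ m → (((k:ℝ)/q) * m) * Real.log (((k:ℝ)/q) * m)
        = ((k:ℝ)/q) * (m * Real.log m) + (((k:ℝ)/q) * Real.log ((k:ℝ)/q)) * m := by
      intro m hm
      rcases eq_or_lt_of_le hm with h0 | h0
      · simp [← h0]
      · rw [Real.log_mul (by positivity) h0.ne']
        ring
    have hrow' : ∀ i, ∑ j, N i j * Real.log (N i j)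
        = ((k:ℝ)/q) * (∑ a, M i a * Real.log (M i a))
          + ((k:ℝ)/q) * Real.log ((k:ℝ)/q)
          + ((q:ℝ) - k) * ((1/(q:ℝ)) * Real.log (1/(q:ℝ))) := by
      intro i
      have e : ∀ j : Fin q, N i j * Real.log (N i j)
          = (if h : (j : ℕ) < k then (((k:ℝ)/q) * M i ⟨j, h⟩) * Real.log (((k:ℝ)/q) * M i ⟨j, h⟩)
              else (1/(q:ℝ)) * Real.log (1/(q:ℝ))) := by
        intro j
        by_cases h : (j : ℕ) < k <;> simp [hNdef, h]
      rw [Finset.sum_congr rfl (fun j _ => e j),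
        row_split_aux hkq
          (fun a => (((k:ℝ)/q) * M i a) * Real.log (((k:ℝ)/q) * M i a))
          ((1/(q:ℝ)) * Real.log (1/(q:ℝ)))]
      have e2 : ∑ a : Fin k, (((k:ℝ)/q) * M i a) * Real.log (((k:ℝ)/q) * M i a)
          = ((k:ℝ)/q) * (∑ a, M i a * Real.log (M i a))
            + ((k:ℝ)/q) * Real.log ((k:ℝ)/q) := by
        rw [Finset.sum_congr rfl (fun a _ => eterm (M i a) (hnn i a)),
          Finset.sum_add_distrib, ← Finset.mul_sum, ← Finset.mul_sum, hrow i, mul_one]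
      rw [e2]
    rw [Finset.sum_congr rfl (fun i _ => hrow' i)]
    rw [Finset.sum_add_distrib, Finset.sum_add_distrib, ← Finset.mul_sum, ← hSdef,
      Finset.sum_const, Finset.sum_const, Finset.card_univ, Fintype.card_fin,
      nsmul_eq_mul, nsmul_eq_mul]
    field_simp
  -- apply the hypothesis to N
  have key := hAN N hNnn hNrow
  rw [hNsq, hNlog] at key
  -- abbreviations
  set y : ℝ := (((k:ℝ)/q) * ρ - 1) / (((q:ℝ) - 1) * ((k:ℝ) - 1)) with hydef
  set B : ℝ := Real.log k - (1/(q:ℝ)) * (-S) with hBdef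
  set t : ℝ := ((k:ℝ) * ((k:ℝ) - 1)) / ((q:ℝ) * ((q:ℝ) - 1)) with htdef
  -- rewrite key as c * log (1 + t * y) ≤ (k/q) * B
  have key2 : c * Real.log (1 + t * y) ≤ ((k:ℝ)/q) * B := by
    have e1 : 1 + t * y = 1 + ((((k:ℝ)/q)^2 * ρ + ((q:ℝ) - k)/q) - 1) / ((q:ℝ) - 1)^2 := by
      rw [hydef, htdef]
      field_simp
      ring
    have e2 : ((k:ℝ)/q) * B
        = Real.log q - (1/(q:ℝ)) *
            (-(((k:ℝ)/q) * S + (k:ℝ) * Real.log ((k:ℝ)/q)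
              + ((q:ℝ) - k) * Real.log (1/(q:ℝ)))) := by
      rw [hBdef, Real.log_div hKne hQne, one_div, Real.log_inv]
      field_simp
      ring
    rw [e1, e2]
    exact key
  -- positivity of y
  have hrowsq : ∀ i, 1/(k:ℝ) ≤ ∑ j, (M i j)^2 := by
    intro i
    have h0 : (0:ℝ) ≤ ∑ j, (M i j - 1/(k:ℝ))^2 :=
      Finset.sum_nonneg fun j _ => sq_nonneg _
    have hexp : ∑ j, (M i j - 1/(k:ℝ))^2
        = (∑ j, (M i j)^2) - (2/(k:ℝ)) * (∑ j, M i j) + (k:ℝ) * (1/(k:ℝ))^2 := by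
      rw [Finset.sum_congr rfl (fun j _ =>
        show (M i j - 1/(k:ℝ))^2
            = ((M i j)^2 - (2/(k:ℝ)) * (M i j) + (1/(k:ℝ))^2) from by ring)]
      rw [Finset.sum_add_distrib, Finset.sum_sub_distrib, ← Finset.mul_sum,
        Finset.sum_const, Finset.card_univ, Fintype.card_fin, nsmul_eq_mul]
    have hconst : (k:ℝ) * (1/(k:ℝ))^2 = 1/(k:ℝ) := by
      field_simp
    rw [hexp, hrow i, hconst, mul_one] at h0
    have h2k : (2:ℝ)/k = 2 * (1/(k:ℝ)) := by ring
    linarith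
  have hρq : (q:ℝ)/k ≤ ρ := by
    have e : (q:ℝ)/k = ∑ _i : Fin q, 1/(k:ℝ) := by
      rw [Finset.sum_const, Finset.card_univ, Fintype.card_fin, nsmul_eq_mul]
      field_simp
    rw [hρdef, e]
    exact Finset.sum_le_sum fun i _ => hrowsq i
  have hX : 0 ≤ ((k:ℝ)/q) * ρ - 1 := by
    have h1 := mul_le_mul_of_nonneg_left hρq (le_of_lt (div_pos hK0 hQ0))
    have h2 : ((k:ℝ)/q) * ((q:ℝ)/k) = 1 := by field_simp
    rw [h2] at h1
    linarith
  have hy : 0 ≤ y := by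
    rw [hydef]
    exact div_nonneg hX (by positivity)
  -- t ∈ [0,1]
  have ht0 : 0 ≤ t := by rw [htdef]; positivity
  have ht1 : t ≤ 1 := by
    rw [htdef, div_le_one (by positivity)]
    have : (k:ℝ) - 1 ≤ (q:ℝ) - 1 := by linarith
    nlinarith
  have hcon := log_concave_aux ht0 ht1 hy
  -- final chain
  have hfin : (((k:ℝ) - 1) / ((q:ℝ) - 1)) * c * Real.log (1 + y) ≤ B := by
    have e5 : (((k:ℝ) - 1) / ((q:ℝ) - 1)) * c * Real.log (1 + y)
        = ((q:ℝ)/k) * (c * (t * Real.log (1 + y))) := by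
      rw [htdef]; field_simp
    rw [e5]
    have step1 : c * (t * Real.log (1 + y)) ≤ c * Real.log (1 + t * y) :=
      mul_le_mul_of_nonneg_left hcon hc.le
    have step2 : ((q:ℝ)/k) * (c * (t * Real.log (1 + y)))
        ≤ ((q:ℝ)/k) * (((k:ℝ)/q) * B) :=
      mul_le_mul_of_nonneg_left (le_trans step1 key2) (by positivity)
    have e6 : ((q:ℝ)/k) * (((k:ℝ)/q) * B) = B := by
      field_simp
    rw [e6] at step2
    linarith
  exact hfin
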